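/- arXiv:1910.11733 — 3 statements merged into one kernel-verified Lean document; each statement's English description precedes it below -/
import Mathlib

section
/- Let G be a graph with vertex degrees bounded by d such that sup_x |B_n(x)| ≤ K₁·e^{K₂ n^α} for constants K₁, K₂ > 0 and α ∈ (0,1). Then there are constants L₁, L₂ > 0 such that for all N > L₁: Sep(N)/N ≤ L₂/(log N)^{1/α − 1}. -/
open Set Filter

namespace SepProfile

variable {V : Type*}

/-- Edge boundary of a vertex set: pairs (a,b) with a ∈ A, b ∉ A, a ~ b. -/
def ebd (G : SimpleGraph V) (A : Set V) : Set (V × V) :=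
  {p | G.Adj p.1 p.2 ∧ p.1 ∈ A ∧ p.2 ∉ A}

/-- Isoperimetric ratio |∂A|/|A|. -/
noncomputable def ratio (G : SimpleGraph V) (A : Set V) : ℝ :=
  ((ebd G A).ncard : ℝ) / (A.ncard : ℝ)

/-- Isoperimetric profile Λ(n). -/
noncomputable def isop (G : SimpleGraph V) (n : ℕ) : ℝ :=
  sInf {x | ∃ A : Set V, A.Finite ∧ A.Nonempty ∧ A.ncard ≤ n ∧ x = ratio G A}

/-- Boundary of A within F (edges of the induced subgraph on F leaving A). -/
def inbd (G : SimpleGraph V) (F A : Set V) : Set (V × V) :=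
  {p | G.Adj p.1 p.2 ∧ p.1 ∈ A ∧ p.2 ∈ F \ A}

/-- Cheeger constant of the subgraph induced on F. -/
noncomputable def cheeger (G : SimpleGraph V) (F : Set V) : ℝ :=
  sInf {x | ∃ A : Set V, A ⊆ F ∧ A.Nonempty ∧ 2 * A.ncard ≤ F.ncard ∧
    x = ((inbd G F A).ncard : ℝ) / (A.ncard : ℝ)}

/-- Separation profile Sep(n) = sup_{|F| ≤ n} |F|·h(F). -/
noncomputable def sep (G : SimpleGraph V) (n : ℕ) : ℝ :=
  sSup {x | ∃ F : Set V, F.Finite ∧ F.ncard ≤ n ∧ x = (F.ncard : ℝ) * cheeger G F}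

/-- A finite set is optimal if it realizes the isoperimetric profile. -/
def Optimal (G : SimpleGraph V) (F : Set V) : Prop :=
  F.Finite ∧ F.Nonempty ∧ ratio G F = isop G F.ncard

/-- An integer is optimal if some optimal set has that cardinality. -/
def OptimalInt (G : SimpleGraph V) (n : ℕ) : Prop :=
  ∃ F : Set V, Optimal G F ∧ F.ncard = n

/-- Ball of radius n around v for the graph metric. -/
def ball (G : SimpleGraph V) (v : V) (n : ℕ) : Set V :=
  {u | G.Reachable v u ∧ G.dist v u ≤ n}

/-- All degrees bounded by D. -/
def DegLE (G : SimpleGraph V) (D : ℕ) : Prop :=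
  ∀ v, (G.neighborSet v).ncard ≤ D

/-- Amenability: the isoperimetric profile tends to 0. -/
def Amenable (G : SimpleGraph V) : Prop :=
  Tendsto (fun n => isop G n) atTop (nhds 0)

/-- F together with its outer vertex neighbourhood. -/
def nbh (G : SimpleGraph V) (F : Set V) : Set V :=
  F ∪ {b | ∃ a ∈ F, G.Adj a b}

/-- Partial self-isomorphisms: every finite F has a disjoint isomorphic copy
(together with its boundary neighbourhood). -/
def HasPSI (G : SimpleGraph V) : Prop :=
  ∀ F : Set V, F.Finite →
    ∃ F' : Set V, F'.Finite ∧ Disjoint F F' ∧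
      ∃ e : G.induce (nbh G F) ≃g G.induce (nbh G F'),
        ∀ x : nbh G F, (x : V) ∈ F ↔ ((e x : V) ∈ F')

/-- δ-geometric decay function p_f^δ(x) = inf {y > 0 : f(y) ≤ δ·f(x)}. -/
noncomputable def gdecay (f : ℝ → ℝ) (δ x : ℝ) : ℝ :=
  sInf {y | 0 < y ∧ f y ≤ δ * f x}

end SepProfile

open SepProfile Real


namespace Stmt15Aux
open SepProfile
variable {V : Type*} (G : SimpleGraph V)

lemma exp_sub_one_le_three (y : ℝ) (h0 : 0 ≤ y) (h1 : y ≤ 1) : Real.exp y - 1 ≤ 3 * y := by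
  have h2 : 1 - y ≤ Real.exp (-y) := by
    have := Real.add_one_le_exp (-y)
    linarith
  have h3 : Real.exp (-y) = (Real.exp y)⁻¹ := Real.exp_neg y
  have h4 : 0 < Real.exp y := Real.exp_pos y
  have h5 : (1 - y) * Real.exp y ≤ 1 := by
    rw [h3] at h2
    calc (1 - y) * Real.exp y ≤ (Real.exp y)⁻¹ * Real.exp y := by nlinarith
      _ = 1 := inv_mul_cancel₀ (ne_of_gt h4)
  have h6 : Real.exp y ≤ Real.exp 1 := Real.exp_le_exp.2 h1
  have h7 : Real.exp 1 < 3 := by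
    have := Real.exp_one_lt_d9
    linarith
  nlinarith

def grow (F : Set V) (v : V) : ℕ → Set V
  | 0 => {v}
  | n+1 => grow F v n ∪ ((F \ grow F v n) ∩ {b | ∃ a ∈ grow F v n, G.Adj a b})

lemma grow_subset_succ (F : Set V) (v : V) (r : ℕ) : grow G F v r ⊆ grow G F v (r+1) :=
  Set.subset_union_left

lemma mem_grow (F : Set V) (v : V) (r : ℕ) : v ∈ grow G F v r := by
  induction r with
  | zero => exact rfl
  | succ r ih => exact grow_subset_succ G F v r ih

lemma grow_subset (F : Set V) {v : V} (hv : v ∈ F) (r : ℕ) : grow G F v r ⊆ F := by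
  induction r with
  | zero => simpa [grow]
  | succ r ih => exact Set.union_subset ih (fun b hb => hb.1.1)

lemma grow_subset_ball (F : Set V) (v : V) (r : ℕ) : grow G F v r ⊆ ball G v r := by
  induction r with
  | zero =>
    rintro u rfl
    exact ⟨⟨SimpleGraph.Walk.nil⟩, by simp [SimpleGraph.dist_self]⟩
  | succ r ih =>
    rintro b (hb | hb)
    · obtain ⟨h1, h2⟩ := ih hb
      exact ⟨h1, h2.trans (Nat.le_succ r)⟩
    · obtain ⟨a, ha, hadj⟩ := hb.2
      obtain ⟨hra, hda⟩ := ih ha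
      obtain ⟨p, hp⟩ := hra.exists_walk_length_eq_dist
      refine ⟨hra.trans hadj.reachable, ?_⟩
      calc G.dist v b ≤ (p.concat hadj).length := SimpleGraph.dist_le _
        _ = p.length + 1 := p.length_concat hadj
        _ ≤ r + 1 := by omega

lemma ball_mono (v : V) {m n : ℕ} (h : m ≤ n) : ball G v m ⊆ ball G v n :=
  fun u hu => ⟨hu.1, hu.2.trans h⟩

lemma neighborSet_subset_ball (v : V) : G.neighborSet v ⊆ ball G v 1 :=
  fun _ hu => ⟨hu.reachable, SimpleGraph.dist_le hu.toWalk⟩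

lemma ncard_biUnion_le' {β γ : Type*} (D : ℕ) {T : Set β} (hT : T.Finite) (f : β → Set γ)
    (hf : ∀ b, (f b).ncard ≤ D) (hffin : ∀ b, (f b).Finite) :
    (⋃ b ∈ T, f b).Finite ∧ (⋃ b ∈ T, f b).ncard ≤ D * T.ncard := by
  refine Set.Finite.induction_on _ hT (motive := fun T _ => (⋃ b ∈ T, f b).Finite ∧ (⋃ b ∈ T, f b).ncard ≤ D * T.ncard) (by simp) ?_
  intro a T' haT' hT' ih
  have hrw : (⋃ b ∈ insert a T', f b) = f a ∪ ⋃ b ∈ T', f b := by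
    simp [Set.biUnion_insert]
  constructor
  · rw [hrw]; exact (hffin a).union ih.1
  · rw [hrw, Set.ncard_insert_of_notMem haT' hT']
    calc (f a ∪ ⋃ b ∈ T', f b).ncard ≤ (f a).ncard + (⋃ b ∈ T', f b).ncard :=
          Set.ncard_union_le _ _
      _ ≤ D + D * T'.ncard := Nat.add_le_add (hf a) ih.2
      _ = D * (T'.ncard + 1) := by ring

lemma ncard_le_of_sub_biUnion {β γ : Type*} (D : ℕ) {T : Set β} (hT : T.Finite) (f : β → Set γ)
    (hf : ∀ b, (f b).ncard ≤ D) (hffin : ∀ b, (f b).Finite) {S : Set γ}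
    (hS : S ⊆ ⋃ b ∈ T, f b) : S.ncard ≤ D * T.ncard := by
  obtain ⟨h1, h2⟩ := ncard_biUnion_le' D hT f hf hffin
  exact le_trans (Set.ncard_le_ncard hS h1) h2

lemma ncard_inbd_le_self (D : ℕ) (hD : ∀ u, (G.neighborSet u).ncard ≤ D)
    (hnf : ∀ u, (G.neighborSet u).Finite) (F A : Set V) (hA : A.Finite) :
    (inbd G F A).ncard ≤ D * A.ncard := by
  refine ncard_le_of_sub_biUnion D hA (fun a => (fun b => (a, b)) '' G.neighborSet a)
    (fun a => le_trans (Set.ncard_image_le (hnf a)) (hD a))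
    (fun a => (hnf a).image _) ?_
  rintro ⟨a, b⟩ ⟨hadj, ha, hb⟩
  exact Set.mem_biUnion ha ⟨b, hadj, rfl⟩

lemma ncard_inbd_le_shell (D : ℕ) (hD : ∀ u, (G.neighborSet u).ncard ≤ D)
    (hnf : ∀ u, (G.neighborSet u).Finite) (F : Set V) (v : V) (r : ℕ)
    (hfin : (grow G F v (r+1)).Finite) :
    (inbd G F (grow G F v r)).ncard ≤ D * (grow G F v (r+1) \ grow G F v r).ncard := by
  refine ncard_le_of_sub_biUnion D (hfin.subset Set.diff_subset)
    (fun b => (fun a => (a, b)) '' G.neighborSet b)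
    (fun b => le_trans (Set.ncard_image_le (hnf b)) (hD b))
    (fun b => (hnf b).image _) ?_
  rintro ⟨a, b⟩ ⟨hadj, ha, hb⟩
  refine Set.mem_biUnion (⟨Or.inr ⟨hb, a, ha, hadj⟩, hb.2⟩ :
    b ∈ grow G F v (r+1) \ grow G F v r) ⟨a, hadj.symm, rfl⟩

lemma grow_finite {F : Set V} {v : V} {n : ℕ} (hballfin : (ball G v n).Finite) :
    ∀ r ≤ n, (grow G F v r).Finite := by
  intro r hr
  exact (hballfin.subset (ball_mono G v hr)).subset (grow_subset_ball G F v r)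

lemma exists_small_shell (D : ℕ) (hD : ∀ u, (G.neighborSet u).ncard ≤ D) (hD1 : 1 ≤ D)
    (hnf : ∀ u, (G.neighborSet u).Finite)
    (F : Set V) (v : V) {n : ℕ} (hn : 1 ≤ n) {M : ℝ} (hM : 0 < M)
    (hballM : ((ball G v n).ncard : ℝ) ≤ M) (hballfin : (ball G v n).Finite) :
    ∃ r < n, ((inbd G F (grow G F v r)).ncard : ℝ) ≤
      (D * (Real.exp (Real.log M / n) - 1)) * ((grow G F v r).ncard : ℝ) := by
  by_contra hcon
  push_neg at hcon
  set q : ℝ := Real.exp (Real.log M / n) with hq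
  have hq0 : 0 < q := Real.exp_pos _
  have hgf := grow_finite G hballfin (F := F) (v := v)
  have hD0 : (0:ℝ) < D := by exact_mod_cast hD1
  have hstep : ∀ r, r < n → q * ((grow G F v r).ncard : ℝ) < ((grow G F v (r+1)).ncard : ℝ) := by
    intro r hr
    have h1 := hcon r hr
    have h2 := ncard_inbd_le_shell G D hD hnf F v r (hgf (r+1) hr)
    have hsub := grow_subset_succ G F v r
    have hdiff : (grow G F v (r+1) \ grow G F v r).ncard
        = (grow G F v (r+1)).ncard - (grow G F v r).ncard :=
      Set.ncard_diff hsub (hgf r hr.le)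
    have hle : (grow G F v r).ncard ≤ (grow G F v (r+1)).ncard :=
      Set.ncard_le_ncard hsub (hgf (r+1) hr)
    have h2' : ((inbd G F (grow G F v r)).ncard : ℝ)
        ≤ D * (((grow G F v (r+1)).ncard : ℝ) - ((grow G F v r).ncard : ℝ)) := by
      rw [hdiff] at h2
      have := (Nat.cast_le (α := ℝ)).2 h2
      push_cast [Nat.cast_sub hle] at this
      linarith
    nlinarith [h1, h2']
  have hgrow0 : ((grow G F v 0).ncard : ℝ) = 1 := by
    simp [grow]
  have key : ∀ r, 1 ≤ r → r ≤ n → q ^ r < ((grow G F v r).ncard : ℝ) := by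
    intro r
    induction r with
    | zero => omega
    | succ r ih =>
      intro _ hrn
      rcases Nat.eq_zero_or_pos r with h1 | h1
      · subst h1
        have := hstep 0 (by omega)
        rw [hgrow0] at this
        simpa using this
      · have hr1 : 1 ≤ r := h1
        have hrn' : r ≤ n := by omega
        have := hstep r (by omega)
        have ihr := ih hr1 hrn'
        calc q ^ (r+1) = q * q ^ r := by ring
          _ < q * ((grow G F v r).ncard : ℝ) := by
              exact (mul_lt_mul_iff_right₀ hq0).2 ihr
          _ < _ := this
  have hfin : q ^ n < ((grow G F v n).ncard : ℝ) := key n hn le_rfl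
  have hqn : q ^ n = M := by
    rw [hq, ← Real.exp_nat_mul]
    rw [mul_div_cancel₀ _ (by exact_mod_cast Nat.one_le_iff_ne_zero.mp hn : (n:ℝ) ≠ 0)]
    exact Real.exp_log hM
  have hle2 : ((grow G F v n).ncard : ℝ) ≤ M :=
    le_trans (by exact_mod_cast Set.ncard_le_ncard (grow_subset_ball G F v n) hballfin) hballM
  rw [hqn] at hfin
  linarith

lemma cheeger_bddBelow (F : Set V) :
    BddBelow {x | ∃ A : Set V, A ⊆ F ∧ A.Nonempty ∧ 2 * A.ncard ≤ F.ncard ∧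
      x = ((inbd G F A).ncard : ℝ) / (A.ncard : ℝ)} := by
  refine ⟨0, fun x hx => ?_⟩
  obtain ⟨A, _, _, _, rfl⟩ := hx
  positivity

lemma cheeger_nonneg (F : Set V) : 0 ≤ cheeger G F := by
  apply Real.sInf_nonneg
  rintro x ⟨A, _, _, _, rfl⟩
  positivity

lemma cheeger_le_D (D : ℕ) (hD : ∀ u, (G.neighborSet u).ncard ≤ D)
    (hnf : ∀ u, (G.neighborSet u).Finite) (F : Set V) (hF : F.Finite) :
    cheeger G F ≤ D := by
  rw [cheeger]
  rcases Set.eq_empty_or_nonempty {x | ∃ A : Set V, A ⊆ F ∧ A.Nonempty ∧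
      2 * A.ncard ≤ F.ncard ∧ x = ((inbd G F A).ncard : ℝ) / (A.ncard : ℝ)} with he | hne
  · rw [he, Real.sInf_empty]; positivity
  · obtain ⟨x, hx⟩ := hne
    refine le_trans (csInf_le (cheeger_bddBelow G F) hx) ?_
    obtain ⟨A, hAF, hAne, _, rfl⟩ := hx
    have hAfin : A.Finite := hF.subset hAF
    have hA0 : (0:ℝ) < A.ncard := by
      exact_mod_cast (Set.ncard_pos hAfin).2 hAne
    rw [div_le_iff₀ hA0]
    exact_mod_cast ncard_inbd_le_self G D hD hnf F A hAfin

lemma cheeger_le_eps (D : ℕ) (hD : ∀ u, (G.neighborSet u).ncard ≤ D) (hD1 : 1 ≤ D)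
    (hnf : ∀ u, (G.neighborSet u).Finite)
    (F : Set V) (hF : F.Finite) {v : V} (hv : v ∈ F) {n : ℕ} (hn : 1 ≤ n) {M : ℝ}
    (hM : 0 < M) (hballM : ((ball G v n).ncard : ℝ) ≤ M) (hballfin : (ball G v n).Finite)
    (h2M : 2 * M ≤ (F.ncard : ℝ)) :
    cheeger G F ≤ D * (Real.exp (Real.log M / n) - 1) := by
  obtain ⟨r, hrn, hle⟩ := exists_small_shell G D hD hD1 hnf F v hn hM hballM hballfin
  set A := grow G F v r with hA
  have hAfin : A.Finite := grow_finite G hballfin r hrn.le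
  have hAne : A.Nonempty := ⟨v, mem_grow G F v r⟩
  have hA0 : (0:ℝ) < A.ncard := by exact_mod_cast (Set.ncard_pos hAfin).2 hAne
  have hAM : (A.ncard : ℝ) ≤ M := by
    refine le_trans ?_ hballM
    exact_mod_cast Set.ncard_le_ncard
      ((grow_subset_ball G F v r).trans (ball_mono G v hrn.le)) hballfin
  have hmem : ((inbd G F A).ncard : ℝ) / (A.ncard : ℝ) ∈
      {x | ∃ A : Set V, A ⊆ F ∧ A.Nonempty ∧ 2 * A.ncard ≤ F.ncard ∧
        x = ((inbd G F A).ncard : ℝ) / (A.ncard : ℝ)} := by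
    refine ⟨A, grow_subset G F hv r, hAne, ?_, rfl⟩
    have : ((2 * A.ncard : ℕ) : ℝ) ≤ (F.ncard : ℝ) := by push_cast; linarith
    exact_mod_cast this
  refine le_trans (csInf_le (cheeger_bddBelow G F) hmem) ?_
  rw [div_le_iff₀ hA0]
  exact hle

end Stmt15Aux

open Stmt15Aux in
set_option maxHeartbeats 1000000 in
theorem stmt15 {V : Type*} (G : SimpleGraph V) (d : ℕ) (hdeg : DegLE G d)
    (K₁ K₂ α : ℝ) (hK₁ : 0 < K₁) (hK₂ : 0 < K₂) (hα : α ∈ Set.Ioo (0:ℝ) 1)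
    (hball : ∀ (x : V) (n : ℕ), 1 ≤ n → (ball G x n).Finite ∧
      ((ball G x n).ncard : ℝ) ≤ K₁ * Real.exp (K₂ * (n : ℝ) ^ α)) :
    ∃ L₁ > (0:ℝ), ∃ L₂ > (0:ℝ), ∀ N : ℕ, L₁ < (N : ℝ) →
      sep G N / (N : ℝ) ≤ L₂ / (Real.log N) ^ (1/α - 1) := by
  obtain ⟨hα0, hα1⟩ := hα
  have hα1' : α ≤ 1 := le_of_lt hα1
  obtain ⟨D, hDdef⟩ : ∃ D : ℕ, D = d + 1 := ⟨d + 1, rfl⟩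
  have hD : ∀ u, (G.neighborSet u).ncard ≤ D := fun u => hDdef ▸ (hdeg u).trans (Nat.le_succ d)
  have hD1 : 1 ≤ D := by omega
  have hDR : (1:ℝ) ≤ D := by exact_mod_cast hD1
  have hDR0 : (0:ℝ) < D := by linarith
  have hnf : ∀ u, (G.neighborSet u).Finite :=
    fun u => ((hball u 1 le_rfl).1).subset (neighborSet_subset_ball G u)
  obtain ⟨c, hcdef⟩ : ∃ x : ℝ, x = 1/α - 1 := ⟨_, rfl⟩
  have hc : 0 < c := by
    rw [hcdef, sub_pos, lt_div_iff₀ hα0, one_mul]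
    exact hα1
  obtain ⟨C, hCdef⟩ : ∃ x : ℝ, x = K₂ + |Real.log K₁| + 1 := ⟨_, rfl⟩
  have hC1 : 1 ≤ C := by
    have := abs_nonneg (Real.log K₁)
    rw [hCdef]; linarith
  have hC0 : 0 < C := by linarith
  obtain ⟨s, hsdef⟩ : ∃ x : ℝ, x = 2 + 2 * C ^ ((1:ℝ)/(1-α)) := ⟨_, rfl⟩
  have hCp : 0 < C ^ ((1:ℝ)/(1-α)) := Real.rpow_pos_of_pos hC0 _
  have hs2 : 2 ≤ s := by rw [hsdef]; linarith
  have hs0 : 0 ≤ s := by linarith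
  have hsα : 0 ≤ s^α := Real.rpow_nonneg hs0 α
  obtain ⟨A₀, hA₀def⟩ : ∃ x : ℝ, x = 4*C*s^α + 4*C + 4 := ⟨_, rfl⟩
  have h4c : 0 < (4*C)^c := Real.rpow_pos_of_pos (by linarith) c
  have h2c : 0 < (2*c)^c := Real.rpow_pos_of_pos (by linarith) c
  have hL₂ : (0:ℝ) < 6*(D:ℝ)*C*(4*C)^c + (D:ℝ)*(2*c)^c := by
    have h1 : 0 < 6*(D:ℝ)*C := by nlinarith
    nlinarith
  refine ⟨Real.exp A₀, Real.exp_pos _, 6*(D:ℝ)*C*(4*C)^c + (D:ℝ)*(2*c)^c, hL₂, ?_⟩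
  intro N hN
  rw [← hcdef]
  have hN0 : (0:ℝ) < N := lt_trans (Real.exp_pos _) hN
  have hlogN : A₀ < Real.log N := (Real.lt_log_iff_exp_lt hN0).2 hN
  have hlogN4 : 4 + 4*C ≤ Real.log N := by
    have h1 : 0 ≤ 4*C*s^α := by positivity
    rw [hA₀def] at hlogN; linarith
  have hlogN0 : 0 < Real.log N := by linarith
  obtain ⟨u, hudef⟩ : ∃ x : ℝ, x = Real.log N / (4*C) := ⟨_, rfl⟩
  have hu0 : 0 < u := hudef ▸ div_pos hlogN0 (by linarith)
  obtain ⟨t, htdef⟩ : ∃ x : ℝ, x = u ^ ((1:ℝ)/α) := ⟨_, rfl⟩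
  have ht0 : 0 < t := htdef ▸ Real.rpow_pos_of_pos hu0 _
  have hus : s ^ α ≤ u := by
    rw [hudef, le_div_iff₀ (by linarith : (0:ℝ) < 4*C)]
    have h1 : 4*C*s^α ≤ A₀ := by rw [hA₀def]; linarith
    have h2 : s^α * (4*C) = 4*C*s^α := by ring
    linarith
  have hts : s ≤ t := by
    have h1 : (s^α) ^ ((1:ℝ)/α) ≤ u ^ ((1:ℝ)/α) :=
      Real.rpow_le_rpow hsα hus (one_div_nonneg.2 (le_of_lt hα0))
    rw [← Real.rpow_mul hs0, show α * ((1:ℝ)/α) = 1 from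
      mul_one_div_cancel (ne_of_gt hα0), Real.rpow_one, ← htdef] at h1
    exact h1
  have ht2 : 2 ≤ t := le_trans hs2 hts
  obtain ⟨n, hn2, hnt, htn⟩ : ∃ n : ℕ, 2 ≤ n ∧ (n:ℝ) ≤ t ∧ t/2 ≤ (n:ℝ) := by
    refine ⟨⌊t⌋₊, Nat.le_floor (by exact_mod_cast ht2), Nat.floor_le (le_of_lt ht0), ?_⟩
    have := Nat.sub_one_lt_floor t
    linarith
  have hn1 : 1 ≤ n := by omega
  have hnR0 : (0:ℝ) < n := by
    have : (2:ℝ) ≤ (n:ℝ) := by exact_mod_cast hn2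
    linarith
  have hn0' : (0:ℝ) ≤ (n:ℝ) := le_of_lt hnR0
  obtain ⟨M, hMdef⟩ : ∃ x : ℝ, x = K₁ * Real.exp (K₂ * (n:ℝ)^α) := ⟨_, rfl⟩
  have hM : 0 < M := hMdef ▸ mul_pos hK₁ (Real.exp_pos _)
  have hlogM : Real.log M = Real.log K₁ + K₂ * (n:ℝ)^α := by
    rw [hMdef, Real.log_mul (ne_of_gt hK₁) (ne_of_gt (Real.exp_pos _)), Real.log_exp]
  have hnα1 : 1 ≤ (n:ℝ)^α := Real.one_le_rpow (by exact_mod_cast hn1) (le_of_lt hα0)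
  have hfC : Real.log K₁ + K₂ * (n:ℝ)^α ≤ C * (n:ℝ)^α := by
    have h1 : Real.log K₁ ≤ |Real.log K₁| := le_abs_self _
    have h2 : |Real.log K₁| ≤ |Real.log K₁| * (n:ℝ)^α :=
      le_mul_of_one_le_right (abs_nonneg _) hnα1
    have h3 : (K₂ + |Real.log K₁| + 1)*(n:ℝ)^α
        = K₂*(n:ℝ)^α + |Real.log K₁| * (n:ℝ)^α + (n:ℝ)^α := by ring
    rw [hCdef, h3]
    linarith
  have htαu : t^α = u := by
    rw [htdef, ← Real.rpow_mul (le_of_lt hu0),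
      show ((1:ℝ)/α) * α = 1 from one_div_mul_cancel (ne_of_gt hα0), Real.rpow_one]
  have hnαt : (n:ℝ)^α ≤ t^α := Real.rpow_le_rpow hn0' hnt (le_of_lt hα0)
  have hlogMu : Real.log M ≤ Real.log N / 4 := by
    have h1 : C * (n:ℝ)^α ≤ C * t^α := mul_le_mul_of_nonneg_left hnαt (le_of_lt hC0)
    have h2 : C * u = Real.log N / 4 := by
      rw [hudef]
      field_simp
    rw [hlogM]
    calc Real.log K₁ + K₂ * (n:ℝ)^α ≤ C * (n:ℝ)^α := hfC
      _ ≤ C * t^α := h1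
      _ = Real.log N / 4 := by rw [htαu]; exact h2
  have hNhalf : 2*M ≤ (N:ℝ)^((1:ℝ)/2) := by
    have h1 : 2*M ≤ Real.exp 1 * Real.exp (Real.log N / 4) := by
      have e2 : (2:ℝ) ≤ Real.exp 1 := by
        have := Real.add_one_le_exp 1; linarith
      have eM : M ≤ Real.exp (Real.log N / 4) := by
        rw [← Real.exp_log hM]
        exact Real.exp_le_exp.2 hlogMu
      exact mul_le_mul e2 eM (le_of_lt hM) (le_of_lt (Real.exp_pos _))
    have h2 : Real.exp 1 * Real.exp (Real.log N / 4) = Real.exp (1 + Real.log N / 4) := by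
      rw [← Real.exp_add]
    have h4 : (N:ℝ)^((1:ℝ)/2) = Real.exp (Real.log N * ((1:ℝ)/2)) := Real.rpow_def_of_pos hN0 _
    rw [h4]
    calc 2*M ≤ Real.exp (1 + Real.log N / 4) := by rw [← h2]; exact h1
      _ ≤ Real.exp (Real.log N * (1/2)) := Real.exp_le_exp.2 (by linarith)
  have h1α : 0 ≤ 1 - α := by linarith
  have hCn : C ≤ (n:ℝ)^(1-α) := by
    have hsn : C^((1:ℝ)/(1-α)) ≤ (n:ℝ) := by
      have h9 : s/2 ≤ (n:ℝ) := by linarith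
      rw [hsdef] at h9; linarith
    calc C = (C^((1:ℝ)/(1-α)))^(1-α) := by
          rw [← Real.rpow_mul (le_of_lt hC0),
            show (1:ℝ)/(1-α)*(1-α) = 1 from one_div_mul_cancel (by linarith), Real.rpow_one]
      _ ≤ (n:ℝ)^(1-α) := Real.rpow_le_rpow (le_of_lt hCp) hsn h1α
  have hn1α0 : 0 < (n:ℝ)^(1-α) := Real.rpow_pos_of_pos hnR0 _
  have hna1 : (n:ℝ)^(α-1) = ((n:ℝ)^(1-α))⁻¹ := by
    rw [show α-1 = -(1-α) from by ring, Real.rpow_neg hn0']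
  obtain ⟨y, hydef⟩ : ∃ x : ℝ, x = C * (n:ℝ)^(α-1) := ⟨_, rfl⟩
  have hy0 : 0 ≤ y := hydef ▸ mul_nonneg (le_of_lt hC0) (Real.rpow_nonneg hn0' _)
  have hy1 : y ≤ 1 := by
    have h9 : C / (n:ℝ)^(1-α) ≤ 1 := (div_le_one hn1α0).2 hCn
    rw [div_eq_mul_inv] at h9
    rw [hydef, hna1]; exact h9
  have hlogMn : Real.log M / (n:ℝ) ≤ y := by
    have h5 : C * (n:ℝ)^α / (n:ℝ) = y := by
      rw [hydef, Real.rpow_sub hnR0, Real.rpow_one]; ring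
    rw [← h5, hlogM]
    exact (div_le_div_iff_of_pos_right hnR0).2 hfC
  obtain ⟨ε, hεdef⟩ : ∃ x : ℝ, x = (D:ℝ) * (Real.exp (Real.log M / (n:ℝ)) - 1) := ⟨_, rfl⟩
  have hεy : ε ≤ 3 * ((D:ℝ)*y) := by
    have h6 : Real.exp (Real.log M / n) - 1 ≤ Real.exp y - 1 := by
      have := Real.exp_le_exp.2 hlogMn; linarith
    have h7 := exp_sub_one_le_three y hy0 hy1
    rw [hεdef]
    calc (D:ℝ) * (Real.exp (Real.log M / n) - 1) ≤ (D:ℝ)*(3*y) :=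
          mul_le_mul_of_nonneg_left (by linarith) (le_of_lt hDR0)
      _ = 3*((D:ℝ)*y) := by ring
  have htpos : 0 < t^(1-α) := Real.rpow_pos_of_pos ht0 _
  have hy2 : y ≤ 2*C/t^(1-α) := by
    have ha : (t/2)^(1-α) ≤ (n:ℝ)^(1-α) :=
      Real.rpow_le_rpow (by linarith) htn h1α
    have hb : t^(1-α)/2 ≤ (t/2)^(1-α) := by
      rw [Real.div_rpow (le_of_lt ht0) (by norm_num : (0:ℝ) ≤ 2)]
      have h2a : (2:ℝ)^(1-α) ≤ 2 := by
        calc (2:ℝ)^(1-α) ≤ (2:ℝ)^(1:ℝ) :=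
              Real.rpow_le_rpow_of_exponent_le one_le_two (by linarith)
          _ = 2 := Real.rpow_one 2
      have h2b : 0 < (2:ℝ)^(1-α) := Real.rpow_pos_of_pos (by norm_num) _
      exact (div_le_div_iff_of_pos_left htpos (by norm_num) h2b).2 h2a
    have hcomb : t^(1-α)/2 ≤ (n:ℝ)^(1-α) := le_trans hb ha
    have h8 : ((n:ℝ)^(1-α))⁻¹ ≤ (t^(1-α)/2)⁻¹ :=
      inv_anti₀ (by linarith) hcomb
    have h9 : (t^(1-α)/2)⁻¹ = 2/t^(1-α) := inv_div _ _
    rw [hydef, hna1]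
    calc C * ((n:ℝ)^(1-α))⁻¹ ≤ C * (2/t^(1-α)) := by
          rw [← h9]; exact mul_le_mul_of_nonneg_left h8 (le_of_lt hC0)
      _ = 2*C/t^(1-α) := by ring
  have htc : t^(1-α) = (Real.log N)^c / (4*C)^c := by
    have hmul : ((1:ℝ)/α)*(1-α) = c := by
      rw [hcdef]; field_simp
    rw [htdef, ← Real.rpow_mul (le_of_lt hu0), hmul, hudef,
      Real.div_rpow (le_of_lt hlogN0) (by linarith : (0:ℝ) ≤ 4*C)]
  have hlogc0 : 0 < (Real.log N)^c := Real.rpow_pos_of_pos hlogN0 _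
  have hεfinal : ε ≤ 6*(D:ℝ)*C*(4*C)^c / (Real.log N)^c := by
    calc ε ≤ 3*((D:ℝ)*y) := hεy
      _ ≤ 3*((D:ℝ)*(2*C/t^(1-α))) := by
          have := mul_le_mul_of_nonneg_left hy2 (le_of_lt hDR0)
          linarith
      _ = 6*(D:ℝ)*C/t^(1-α) := by ring
      _ = 6*(D:ℝ)*C*(4*C)^c/(Real.log N)^c := by
          rw [htc, div_div_eq_mul_div]
  -- reduce to bounding each element of the sep supremum
  rw [div_le_iff₀ hN0]
  have hRHS0 : 0 ≤ (6*(D:ℝ)*C*(4*C)^c + (D:ℝ)*(2*c)^c) / (Real.log N)^c * N :=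
    mul_nonneg (div_nonneg (le_of_lt hL₂) (le_of_lt hlogc0)) (le_of_lt hN0)
  refine Real.sSup_le ?_ hRHS0
  rintro x ⟨F, hFfin, hFN, rfl⟩
  have hch0 := cheeger_nonneg G F
  have hNN : (F.ncard:ℝ) ≤ (N:ℝ) := by exact_mod_cast hFN
  have hF0 : (0:ℝ) ≤ (F.ncard:ℝ) := Nat.cast_nonneg _
  by_cases hcase : 2*M ≤ (F.ncard:ℝ)
  · -- large F: use the cheeger bound via growing balls
    have hFne : F.Nonempty := by
      refine Set.nonempty_of_ncard_ne_zero ?_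
      intro h0
      rw [h0] at hcase
      push_cast at hcase
      linarith
    obtain ⟨v, hv⟩ := hFne
    have hballv := hball v n hn1
    have hchle : cheeger G F ≤ ε := by
      rw [hεdef, hMdef]
      refine cheeger_le_eps G D hD hD1 hnf F hFfin hv hn1
        (hMdef ▸ hM) (hballv.2) (hballv.1) (hMdef ▸ hcase)
    calc (F.ncard:ℝ) * cheeger G F ≤ (N:ℝ) * ε :=
          mul_le_mul hNN hchle hch0 (le_of_lt hN0)
      _ ≤ (N:ℝ) * (6*(D:ℝ)*C*(4*C)^c/(Real.log N)^c) :=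
          mul_le_mul_of_nonneg_left hεfinal (le_of_lt hN0)
      _ ≤ (6*(D:ℝ)*C*(4*C)^c + (D:ℝ)*(2*c)^c)/(Real.log N)^c * N := by
          have h1 : 6*(D:ℝ)*C*(4*C)^c/(Real.log N)^c
              ≤ (6*(D:ℝ)*C*(4*C)^c + (D:ℝ)*(2*c)^c)/(Real.log N)^c := by
            apply (div_le_div_iff_of_pos_right hlogc0).2
            have : 0 ≤ (D:ℝ)*(2*c)^c := mul_nonneg (le_of_lt hDR0) (le_of_lt h2c)
            linarith
          calc (N:ℝ) * (6*(D:ℝ)*C*(4*C)^c/(Real.log N)^c)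
              ≤ (N:ℝ) * ((6*(D:ℝ)*C*(4*C)^c + (D:ℝ)*(2*c)^c)/(Real.log N)^c) :=
                mul_le_mul_of_nonneg_left h1 (le_of_lt hN0)
            _ = (6*(D:ℝ)*C*(4*C)^c + (D:ℝ)*(2*c)^c)/(Real.log N)^c * N := by ring
  · -- small F: trivial bound |F|·d ≤ √N·d
    push_neg at hcase
    have hchD : cheeger G F ≤ D := cheeger_le_D G D hD hnf F hFfin
    have hroot0 : (0:ℝ) ≤ (N:ℝ)^((1:ℝ)/2) := Real.rpow_nonneg (le_of_lt hN0) _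
    have hxb : (F.ncard:ℝ) * cheeger G F ≤ (N:ℝ)^((1:ℝ)/2) * D := by
      have h1 : (F.ncard:ℝ) ≤ (N:ℝ)^((1:ℝ)/2) := by linarith
      exact mul_le_mul h1 hchD hch0 hroot0
    refine le_trans hxb ?_
    have key : (Real.log N)^c ≤ (2*c)^c * (N:ℝ)^((1:ℝ)/2) := by
      have hr0 : 0 < (N:ℝ)^((1:ℝ)/(2*c)) := Real.rpow_pos_of_pos hN0 _
      have hlog1 : Real.log ((N:ℝ)^((1:ℝ)/(2*c))) ≤ (N:ℝ)^((1:ℝ)/(2*c)) - 1 :=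
        Real.log_le_sub_one_of_pos hr0
      rw [Real.log_rpow hN0] at hlog1
      have hN12 : Real.log N ≤ 2*c * (N:ℝ)^((1:ℝ)/(2*c)) := by
        have h1 := mul_le_mul_of_nonneg_left hlog1 (by linarith : (0:ℝ) ≤ 2*c)
        have h2 : 2*c*((1:ℝ)/(2*c) * Real.log N) = Real.log N := by
          rw [← mul_assoc, mul_one_div_cancel (by linarith : (2:ℝ)*c ≠ 0), one_mul]
        rw [h2] at h1
        have h4 : 2*c*((N:ℝ)^((1:ℝ)/(2*c)) - 1)
            = 2*c*(N:ℝ)^((1:ℝ)/(2*c)) - 2*c := by ring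
        linarith
      calc (Real.log N)^c ≤ (2*c * (N:ℝ)^((1:ℝ)/(2*c)))^c :=
            Real.rpow_le_rpow (le_of_lt hlogN0) hN12 (le_of_lt hc)
        _ = (2*c)^c * ((N:ℝ)^((1:ℝ)/(2*c)))^c :=
            Real.mul_rpow (by linarith) (le_of_lt hr0)
        _ = (2*c)^c * (N:ℝ)^((1:ℝ)/2) := by
            rw [← Real.rpow_mul (le_of_lt hN0),
              show (1:ℝ)/(2*c) * c = 1/2 from by
                rw [div_mul_eq_mul_div, one_mul, mul_comm 2 c, ← div_div,
                  div_self (ne_of_gt hc)]]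
    have hhalf : (N:ℝ)^((1:ℝ)/2) * (N:ℝ)^((1:ℝ)/2) = (N:ℝ) := by
      rw [← Real.rpow_add hN0]
      norm_num
    rw [div_mul_eq_mul_div, le_div_iff₀ hlogc0]
    calc (N:ℝ)^((1:ℝ)/2) * (D:ℝ) * (Real.log N)^c
        ≤ (N:ℝ)^((1:ℝ)/2) * (D:ℝ) * ((2*c)^c * (N:ℝ)^((1:ℝ)/2)) := by
          apply mul_le_mul_of_nonneg_left key
          exact mul_nonneg hroot0 (le_of_lt hDR0)
      _ = (D:ℝ)*(2*c)^c * ((N:ℝ)^((1:ℝ)/2) * (N:ℝ)^((1:ℝ)/2)) := by ring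
      _ = (D:ℝ)*(2*c)^c * N := by rw [hhalf]
      _ ≤ (6*(D:ℝ)*C*(4*C)^c + (D:ℝ)*(2*c)^c) * N := by
          have h1 : 0 ≤ 6*(D:ℝ)*C*(4*C)^c := by
            have := mul_pos (mul_pos (mul_pos (by norm_num : (0:ℝ)<6) hDR0) hC0) h4c
            linarith
          have h2 : 0 ≤ (N:ℝ) := le_of_lt hN0
          exact mul_le_mul_of_nonneg_right (le_add_of_nonneg_left h1) h2
end

section
/- Let G be a connected graph of bounded degree admitting a 1-Lipschitz embedding Φ into an L^p space with compression function ρ(x) = k₁ + k₂·x^a for some k₁, k₂ > 0 and a ∈ (0,1] (i.e. ρ(d(x,y)) ≤ ‖Φ(x) − Φ(y)‖ for all x, y). Assume the distortion lower bound c_p(X) ≥ K·log(|X|)·h(X) holds for every finite induced subgraph X (K depending only on p and the degree bound). Then there is a constant K' such that every finite subgraph X of G with n vertices has Cheeger constant h(X)^{2−a} ≤ K'·(log n)^{−a}; consequently Sep(n)/n ≤ K''/(log n)^{a/(2−a)} for some K''. -/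
open Set Filter

open SepProfile Real
section Stmt16Aux

variable {V : Type*}

lemma aux_cheeger_nonneg (G : SimpleGraph V) (F : Set V) : 0 ≤ cheeger G F := by
  apply Real.sInf_nonneg
  rintro x ⟨A, -, -, -, rfl⟩
  positivity

lemma aux_cheeger_bdd (G : SimpleGraph V) (F : Set V) :
    BddBelow {x | ∃ A : Set V, A ⊆ F ∧ A.Nonempty ∧ 2 * A.ncard ≤ F.ncard ∧
      x = ((inbd G F A).ncard : ℝ) / (A.ncard : ℝ)} := by
  refine ⟨0, ?_⟩
  rintro x ⟨A, -, -, -, rfl⟩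
  positivity

lemma aux_inbd_subset (G : SimpleGraph V) (F A : Set V) : inbd G F A ⊆ A ×ˢ F := by
  rintro ⟨p1, p2⟩ ⟨hadj, h1, h2⟩
  exact ⟨h1, h2.1⟩

lemma aux_inbd_finite (G : SimpleGraph V) {F A : Set V} (hF : F.Finite) (hA : A.Finite) :
    (inbd G F A).Finite := (hA.prod hF).subset (aux_inbd_subset G F A)

lemma aux_count (G : SimpleGraph V) (D : ℕ)
    (hfin : ∀ v : V, (G.neighborSet v).Finite) (hdeg : DegLE G D)
    {S : Set (V × V)} {T : Set V} (hS : S.Finite) (hT : T.Finite)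
    (hST : ∀ p ∈ S, p.2 ∈ T ∧ G.Adj p.2 p.1) :
    S.ncard ≤ D * T.ncard := by
  classical
  rw [Set.ncard_eq_toFinset_card _ hS, Set.ncard_eq_toFinset_card _ hT]
  refine Finset.card_le_mul_card_image_of_maps_to (f := Prod.snd) ?_ D ?_
  · intro p hp
    rw [Set.Finite.mem_toFinset] at hp ⊢
    exact (hST p hp).1
  · intro u _
    have key : ((hS.toFinset.filter fun p => p.2 = u)).card ≤ ((hfin u).toFinset).card := by
      apply Finset.card_le_card_of_injOn Prod.fst
      · intro p hp
        simp only [Finset.coe_filter, Set.mem_setOf_eq, Finset.mem_coe, Finset.mem_filter, Set.Finite.mem_toFinset] at hp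
        simp only [Finset.mem_coe, Set.Finite.mem_toFinset]
        have h2 := (hST p hp.1).2
        rw [hp.2] at h2
        exact h2
      · intro p hp q hq hpq
        simp only [Finset.coe_filter, Set.mem_setOf_eq, Set.Finite.mem_toFinset] at hp hq
        exact Prod.ext hpq (hp.2.trans hq.2.symm)
    calc ((hS.toFinset.filter fun p => p.2 = u)).card ≤ ((hfin u).toFinset).card := key
      _ = (G.neighborSet u).ncard := (Set.ncard_eq_toFinset_card _ (hfin u)).symm
      _ ≤ D := hdeg u

/-- Combinatorial ball of radius r around v in the subgraph induced on X. -/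
def gB (G : SimpleGraph V) (X : Set V) (v : V) : ℕ → Set V
  | 0 => {v}
  | r + 1 => gB G X v r ∪ {u | u ∈ X ∧ ∃ w ∈ gB G X v r, G.Adj w u}

lemma mem_gB (G : SimpleGraph V) (X : Set V) (v : V) : ∀ r, v ∈ gB G X v r
  | 0 => rfl
  | r + 1 => Or.inl (mem_gB G X v r)

lemma gB_subset (G : SimpleGraph V) {X : Set V} {v : V} (hv : v ∈ X) :
    ∀ r, gB G X v r ⊆ X
  | 0 => by
      intro u hu
      rw [show u = v from hu]
      exact hv
  | r + 1 => by
      rintro u (h | h)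
      · exact gB_subset G hv r h
      · exact h.1

lemma gB_mono (G : SimpleGraph V) (X : Set V) (v : V) {r s : ℕ} (hrs : r ≤ s) :
    gB G X v r ⊆ gB G X v s := by
  induction s with
  | zero => rw [Nat.le_zero.mp hrs]
  | succ n ih =>
      rcases Nat.lt_or_ge r (n+1) with h | h
      · exact (ih (by omega)).trans Set.subset_union_left
      · rw [Nat.le_antisymm hrs h]

lemma gB_dist (G : SimpleGraph V) (hconn : G.Connected) (X : Set V) (v : V) :
    ∀ r, ∀ u ∈ gB G X v r, G.dist v u ≤ r
  | 0 => by
      rintro u hu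
      rw [show u = v from hu]
      simp
  | r + 1 => by
      rintro u (h | ⟨-, w, hw, hadj⟩)
      · exact (gB_dist G hconn X v r u h).trans (by omega)
      · calc G.dist v u ≤ G.dist v w + G.dist w u := hconn.dist_triangle
          _ ≤ r + 1 := by
              have h1 := gB_dist G hconn X v r w hw
              have h2 : G.dist w u ≤ 1 := by
                have := SimpleGraph.dist_le hadj.toWalk
                simpa using this
              omega

end Stmt16Aux
set_option maxHeartbeats 2000000 in
theorem stmt16 {V : Type*} {E : Type*} [NormedAddCommGroup E]
    (G : SimpleGraph V) (hconn : G.Connected) (D : ℕ) (hdeg : DegLE G D)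
    (Φ : V → E) (hlip : ∀ x y : V, ‖Φ x - Φ y‖ ≤ (G.dist x y : ℝ))
    (k₁ k₂ a : ℝ) (hk₁ : 0 < k₁) (hk₂ : 0 < k₂) (ha : a ∈ Set.Ioc (0:ℝ) 1)
    (hcomp : ∀ x y : V, x ≠ y →
      k₁ + k₂ * ((G.dist x y : ℝ)) ^ a ≤ ‖Φ x - Φ y‖)
    (K : ℝ) (hK : 0 < K)
    (hdist : ∀ X : Set V, X.Finite → 2 ≤ X.ncard →
      ∃ x ∈ X, ∃ y ∈ X, x ≠ y ∧
        K * Real.log X.ncard * cheeger G X * ‖Φ x - Φ y‖ ≤ (G.dist x y : ℝ)) :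
    (∃ K' > (0:ℝ), ∀ X : Set V, X.Finite → 2 ≤ X.ncard →
      cheeger G X ^ (2 - a) * (Real.log X.ncard) ^ a ≤ K') ∧
    (∃ K'' > (0:ℝ), ∃ N₀ : ℕ, ∀ n : ℕ, N₀ ≤ n →
      sep G n / (n : ℝ) ≤ K'' / (Real.log n) ^ (a / (2 - a))) := by
  classical
  obtain ⟨ha0, ha1⟩ := ha
  have h2a : (0:ℝ) < 2 - a := by linarith
  -- Step 1: all neighbour sets are finite.
  have hfin : ∀ v : V, (G.neighborSet v).Finite := by
    intro v
    by_contra hinf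
    rw [Set.not_infinite.symm, not_not] at hinf
    obtain ⟨m, hm⟩ := exists_nat_gt (Real.exp (2 / (K * k₁)))
    obtain ⟨S, hSsub, hSfin, hScard⟩ := hinf.exists_subset_ncard_eq m
    have hexp1 : (1:ℝ) ≤ Real.exp (2 / (K * k₁)) := Real.one_le_exp (by positivity)
    have hm1 : 1 ≤ m := by exact_mod_cast le_of_lt (lt_of_le_of_lt hexp1 hm)
    have hvS : v ∉ S := fun h => G.irrefl (hSsub h)
    set X := insert v S with hX
    have hXfin : X.Finite := hSfin.insert v
    have hXcard : X.ncard = m + 1 := by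
      rw [Set.ncard_insert_of_notMem hvS hSfin, hScard]
    have hX2 : 2 ≤ X.ncard := by omega
    -- the Cheeger constant of the star is at least 1
    have hch : 1 ≤ cheeger G X := by
      apply le_csInf
      · obtain ⟨u, hu⟩ : S.Nonempty := Set.nonempty_of_ncard_ne_zero (by omega)
        refine ⟨_, {u}, ?_, ⟨u, rfl⟩, ?_, rfl⟩
        · simp only [Set.singleton_subset_iff]; exact Set.mem_insert_of_mem v hu
        · rw [Set.ncard_singleton, hXcard]; omega
      · rintro x ⟨A, hAX, hAne, hA2, rfl⟩
        have hAfin := hXfin.subset hAX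
        have hA1 : 0 < A.ncard := (Set.ncard_pos hAfin).mpr hAne
        have hinbdfin := aux_inbd_finite G hXfin hAfin
        rw [le_div_iff₀ (by exact_mod_cast hA1), one_mul, Nat.cast_le]
        by_cases hv : v ∈ A
        · -- (v, u) for u ∈ X \ A are boundary pairs
          have hc : (X \ A).ncard ≤ (inbd G X A).ncard := by
            apply Set.ncard_le_ncard_of_injOn (fun u => (v, u)) ?_ ?_ hinbdfin
            · intro u hu
              have huv : u ≠ v := fun e => hu.2 (e ▸ hv)
              have huS : u ∈ S := by
                rcases hu.1 with e | h
                · exact absurd e huv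
                · exact h
              exact ⟨hSsub huS, hv, hu⟩
            · intro u₁ _ u₂ _ e
              exact congrArg Prod.snd e
          have hdiff : (X \ A).ncard = X.ncard - A.ncard := Set.ncard_diff hAX hAfin
          omega
        · -- (a, v) for a ∈ A are boundary pairs
          apply Set.ncard_le_ncard_of_injOn (fun u => (u, v)) ?_ ?_ hinbdfin
          · intro u hu
            have huv : u ≠ v := fun e => hv (e ▸ hu)
            have huS : u ∈ S := by
              rcases hAX hu with e | h
              · exact absurd e huv
              · exact h
            exact ⟨(hSsub huS).symm, hu, Set.mem_insert v S, hv⟩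
          · intro u₁ _ u₂ _ e
            exact congrArg Prod.fst e
    obtain ⟨x, hxX, y, hyX, hne, hkey⟩ := hdist X hXfin hX2
    -- the star has diameter ≤ 2
    have hd1 : ∀ u ∈ X, G.dist v u ≤ 1 := by
      rintro u (rfl | hu)
      · simp [SimpleGraph.dist_self]
      · have := SimpleGraph.dist_le (show G.Adj v u from hSsub hu).toWalk
        simpa using this
    have hdxy : (G.dist x y : ℝ) ≤ 2 := by
      have h1 := hd1 x hxX
      have h2 := hd1 y hyX
      have h3 : G.dist x y ≤ G.dist x v + G.dist v y := hconn.dist_triangle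
      rw [SimpleGraph.dist_comm] at h1
      have : G.dist x y ≤ 2 := by omega
      exact_mod_cast this
    have hΦ : k₁ ≤ ‖Φ x - Φ y‖ := by
      have := hcomp x y hne
      have hda : 0 ≤ k₂ * ((G.dist x y : ℝ)) ^ a := by positivity
      linarith
    have hlog : 2 / (K * k₁) < Real.log (X.ncard) := by
      rw [hXcard]
      calc 2 / (K * k₁) = Real.log (Real.exp (2 / (K * k₁))) := (Real.log_exp _).symm
        _ < Real.log m := Real.log_lt_log (Real.exp_pos _) hm
        _ ≤ Real.log ((m + 1 : ℕ) : ℝ) := by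
            apply Real.log_le_log (by exact_mod_cast hm1)
            push_cast; linarith
    set L := Real.log (X.ncard : ℝ) with hL
    have hKk₁ : 0 < K * k₁ := mul_pos hK hk₁
    have hLpos : 0 < L := lt_trans (by positivity) hlog
    have h1 : 2 < K * L * k₁ := by
      rw [div_lt_iff₀ hKk₁] at hlog
      nlinarith
    have h2 : k₁ ≤ cheeger G X * ‖Φ x - Φ y‖ := by nlinarith
    have h3 : K * L * k₁ ≤ K * L * (cheeger G X * ‖Φ x - Φ y‖) :=
      mul_le_mul_of_nonneg_left h2 (le_of_lt (mul_pos hK hLpos))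
    have h4 : K * L * cheeger G X * ‖Φ x - Φ y‖ ≤ (G.dist x y : ℝ) := hkey
    nlinarith
  -- the uniform constants
  set C₁ : ℝ := 2 * D / Real.log 2 + 4 * D with hC₁def
  clear_value C₁
  have hlog2 : (0:ℝ) < Real.log 2 := Real.log_pos one_lt_two
  have hC₁0 : 0 ≤ C₁ := by rw [hC₁def]; positivity
  set K' : ℝ := C₁ ^ ((1:ℝ) - a) / (K * k₂) + 1 with hK'def
  clear_value K'
  have hK'pos : 0 < K' := by
    have : 0 ≤ C₁ ^ ((1:ℝ) - a) / (K * k₂) := by positivity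
    linarith
  have part1 : ∀ X : Set V, X.Finite → 2 ≤ X.ncard →
      cheeger G X ^ (2 - a) * (Real.log X.ncard) ^ a ≤ K' := by
    intro X hXfin hX2
    set n := X.ncard with hn
    have hn2 : (2:ℝ) ≤ (n:ℝ) := by exact_mod_cast hX2
    have hlogn : 0 < Real.log n := Real.log_pos (by linarith)
    have hlogn2 : Real.log 2 ≤ Real.log n := Real.log_le_log (by norm_num) hn2
    have hh0 : 0 ≤ cheeger G X := aux_cheeger_nonneg G X
    rcases eq_or_lt_of_le hh0 with heq | hpos
    · rw [← heq, Real.zero_rpow (by linarith : (2:ℝ) - a ≠ 0), zero_mul]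
      linarith
    set h := cheeger G X with hhdef
    -- h ≤ D and D ≥ 1
    obtain ⟨x₀, hx₀⟩ : X.Nonempty := Set.nonempty_of_ncard_ne_zero (by omega)
    have hhD : h ≤ (D:ℝ) := by
      have hle : h ≤ ((inbd G X {x₀}).ncard : ℝ) / ((({x₀} : Set V).ncard : ℝ)) := by
        refine csInf_le (aux_cheeger_bdd G X) ⟨{x₀}, ?_, ⟨x₀, rfl⟩, ?_, rfl⟩
        · simpa using hx₀
        · rw [Set.ncard_singleton]; omega
      have hcount : (inbd G X {x₀}).ncard ≤ D := by
        have hstep : (inbd G X {x₀}).ncard ≤ (G.neighborSet x₀).ncard := by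
          apply Set.ncard_le_ncard_of_injOn Prod.snd ?_ ?_ (hfin x₀)
          · rintro ⟨p1, p2⟩ ⟨hadj, h1, _⟩
            have e : p1 = x₀ := h1
            rw [e] at hadj
            exact hadj
          · rintro ⟨p1, p2⟩ hp ⟨q1, q2⟩ hq hpq
            have e1 : p1 = x₀ := hp.2.1
            have e2 : q1 = x₀ := hq.2.1
            exact Prod.ext (e1.trans e2.symm) hpq
        exact hstep.trans (hdeg x₀)
      rw [Set.ncard_singleton] at hle
      calc h ≤ ((inbd G X {x₀}).ncard : ℝ) / 1 := by exact_mod_cast hle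
        _ = ((inbd G X {x₀}).ncard : ℝ) := div_one _
        _ ≤ (D:ℝ) := by exact_mod_cast hcount
    have hDnat : 1 ≤ D := by
      rcases Nat.eq_zero_or_pos D with h0 | h1
      · exfalso; rw [h0] at hhD; push_cast at hhD; linarith
      · exact h1
    have hDpos : (0:ℝ) < D := by exact_mod_cast hDnat
    set q : ℝ := 1 + h / D with hqdef
    clear_value q
    have hq1 : 1 < q := by
      have : 0 < h / D := div_pos hpos hDpos
      linarith
    have hq0 : 0 < q := by linarith
    -- ball growth
    have growth : ∀ v ∈ X, ∀ r : ℕ, 2 * (gB G X v r).ncard ≤ n →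
        q * ((gB G X v r).ncard : ℝ) ≤ ((gB G X v (r+1)).ncard : ℝ) := by
      intro v hv r hr
      set B := gB G X v r with hB
      set B' := gB G X v (r+1) with hB'
      have hBX : B ⊆ X := gB_subset G hv r
      have hB'X : B' ⊆ X := gB_subset G hv (r+1)
      have hBfin : B.Finite := hXfin.subset hBX
      have hB'fin : B'.Finite := hXfin.subset hB'X
      have hBpos : 0 < B.ncard := (Set.ncard_pos hBfin).mpr ⟨v, mem_gB G X v r⟩
      have hle : h ≤ ((inbd G X B).ncard : ℝ) / (B.ncard : ℝ) :=
        csInf_le (aux_cheeger_bdd G X) ⟨B, hBX, ⟨v, mem_gB G X v r⟩, hr, rfl⟩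
      have hcount : (inbd G X B).ncard ≤ D * (B' \ B).ncard := by
        apply aux_count G D hfin hdeg (aux_inbd_finite G hXfin hBfin)
          (hB'fin.subset Set.diff_subset)
        rintro ⟨p1, p2⟩ ⟨hadj, h1, h2⟩
        exact ⟨⟨Or.inr ⟨h2.1, p1, h1, hadj⟩, h2.2⟩, hadj.symm⟩
      have hsub : B ⊆ B' := gB_mono G X v (Nat.le_succ r)
      have hdiff : ((B' \ B).ncard : ℝ) = (B'.ncard : ℝ) - (B.ncard : ℝ) := by
        rw [Set.ncard_diff hsub hBfin, Nat.cast_sub (Set.ncard_le_ncard hsub hB'fin)]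
      have h1 : h * (B.ncard : ℝ) ≤ ((inbd G X B).ncard : ℝ) := by
        rw [le_div_iff₀ (by exact_mod_cast hBpos)] at hle
        linarith
      have h2 : ((inbd G X B).ncard : ℝ) ≤ (D:ℝ) * ((B'.ncard : ℝ) - B.ncard) := by
        rw [← hdiff]
        exact_mod_cast hcount
      have h3 : h * (B.ncard : ℝ) ≤ (D:ℝ) * ((B'.ncard : ℝ) - B.ncard) := le_trans h1 h2
      have h4 : (h / D) * (B.ncard : ℝ) ≤ (B'.ncard : ℝ) - B.ncard := by
        rw [div_mul_eq_mul_div, div_le_iff₀ hDpos]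
        nlinarith
      rw [hqdef]
      nlinarith
    -- lower bound on ball sizes
    have low : ∀ v ∈ X, ∀ r : ℕ, 2 * (gB G X v r).ncard ≤ n →
        q ^ r ≤ ((gB G X v r).ncard : ℝ) := by
      intro v hv r
      induction r with
      | zero =>
          intro _
          simp [gB, Set.ncard_singleton]
      | succ r ih =>
          intro hr
          have hmono : (gB G X v r).ncard ≤ (gB G X v (r+1)).ncard :=
            Set.ncard_le_ncard (gB_mono G X v (Nat.le_succ r))
              (hXfin.subset (gB_subset G hv (r+1)))
          have hr' : 2 * (gB G X v r).ncard ≤ n := by omega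
          have hgrow := growth v hv r hr'
          have hih := ih hr'
          calc q ^ (r+1) = q * q ^ r := by ring
            _ ≤ q * ((gB G X v r).ncard : ℝ) := by nlinarith
            _ ≤ _ := hgrow
    -- a stopping radius exists, with a logarithmic bound
    have stopping : ∀ v ∈ X, ∃ r : ℕ, n < 2 * (gB G X v r).ncard ∧
        (r:ℝ) * h ≤ h + 2 * D * Real.log n := by
      intro v hv
      have hex : ∃ r : ℕ, n < 2 * (gB G X v r).ncard := by
        by_contra hcon
        push_neg at hcon
        obtain ⟨r, hr⟩ := exists_nat_gt ((n : ℝ) / (h / D))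
        have hlow := low v hv r (hcon r)
        have hcard : ((gB G X v r).ncard : ℝ) ≤ (n:ℝ) := by
          exact_mod_cast Set.ncard_le_ncard (gB_subset G hv r) hXfin
        have hhd : 0 < h / D := div_pos hpos hDpos
        have hb : 1 + (r:ℝ) * (h / D) ≤ q ^ r := by
          rw [hqdef]
          exact one_add_mul_le_pow (by linarith) r
        rw [div_lt_iff₀ hhd] at hr
        linarith
      refine ⟨Nat.find hex, Nat.find_spec hex, ?_⟩
      set r₀ := Nat.find hex with hr₀
      have hspec : n < 2 * (gB G X v r₀).ncard := Nat.find_spec hex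
      have hr₀pos : 0 < r₀ := by
        rcases Nat.eq_zero_or_pos r₀ with h0 | h1
        · exfalso
          rw [h0] at hspec
          simp only [gB, Set.ncard_singleton] at hspec
          omega
        · exact h1
      have hmin : 2 * (gB G X v (r₀ - 1)).ncard ≤ n := by
        have := Nat.find_min hex (show r₀ - 1 < r₀ by omega)
        omega
      have hlow := low v hv (r₀ - 1) hmin
      have hcard : ((gB G X v (r₀ - 1)).ncard : ℝ) ≤ (n:ℝ) := by
        exact_mod_cast Set.ncard_le_ncard (gB_subset G hv (r₀ - 1)) hXfin
      have hpow : q ^ (r₀ - 1) ≤ (n:ℝ) := le_trans hlow hcard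
      have hlogpow : ((r₀ - 1 : ℕ):ℝ) * Real.log q ≤ Real.log n := by
        have := Real.log_le_log (by positivity) hpow
        rwa [Real.log_pow] at this
      -- log q ≥ h / (2 D)
      have hlogq : h / (2 * D) ≤ Real.log q := by
        have ht1 : h / D ≤ 1 := by
          rw [div_le_one hDpos]; exact hhD
        have hqpos : (0:ℝ) < q := hq0
        have hinv : Real.log q⁻¹ ≤ q⁻¹ - 1 := Real.log_le_sub_one_of_pos (by positivity)
        rw [Real.log_inv] at hinv
        have hq2 : q ≤ 2 := by rw [hqdef]; linarith
        -- log q ≥ 1 - 1/q = (q-1)/q ≥ (q-1)/2 = (h/D)/2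
        have h5 : 1 - q⁻¹ ≤ Real.log q := by linarith
        have h6 : (q - 1) / q = 1 - q⁻¹ := by field_simp
        have h7 : (q - 1) / 2 ≤ (q - 1) / q := by
          apply div_le_div_of_nonneg_left (by linarith) hqpos hq2
        have h8 : (q - 1) / 2 = h / D / 2 := by rw [hqdef]; ring
        have h9 : h / D / 2 = h / (2 * D) := by ring
        linarith
      have hcast : ((r₀ - 1 : ℕ):ℝ) = (r₀:ℝ) - 1 := by
        rw [Nat.cast_sub (by omega)]; norm_num
      rw [hcast] at hlogpow
      have h10 : ((r₀:ℝ) - 1) * (h / (2 * D)) ≤ ((r₀:ℝ) - 1) * Real.log q := by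
        apply mul_le_mul_of_nonneg_left hlogq
        have : (1:ℝ) ≤ (r₀:ℝ) := by exact_mod_cast hr₀pos
        linarith
      have h11 : ((r₀:ℝ) - 1) * (h / (2 * D)) ≤ Real.log n := le_trans h10 hlogpow
      have h12 : ((r₀:ℝ) - 1) * h ≤ 2 * D * Real.log n := by
        rw [show ((r₀:ℝ) - 1) * (h / (2 * D)) = ((r₀:ℝ) - 1) * h / (2 * D) by ring] at h11
        rw [div_le_iff₀ (by positivity)] at h11
        linarith
      linarith
    -- the two distinguished points and their balls
    obtain ⟨x, hxX, y, hyX, hne, hkey⟩ := hdist X hXfin hX2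
    obtain ⟨rx, hrx, hrxb⟩ := stopping x hxX
    obtain ⟨ry, hry, hryb⟩ := stopping y hyX
    set r := max rx ry with hrdef
    have hBx : n < 2 * (gB G X x r).ncard :=
      lt_of_lt_of_le hrx (Nat.mul_le_mul_left 2
        (Set.ncard_le_ncard (gB_mono G X x (le_max_left rx ry))
          (hXfin.subset (gB_subset G hxX r))))
    have hBy : n < 2 * (gB G X y r).ncard :=
      lt_of_lt_of_le hry (Nat.mul_le_mul_left 2
        (Set.ncard_le_ncard (gB_mono G X y (le_max_right rx ry))
          (hXfin.subset (gB_subset G hyX r))))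
    have hcap : ((gB G X x r) ∩ (gB G X y r)).Nonempty := by
      apply Set.nonempty_of_ncard_ne_zero
      have hu : ((gB G X x r) ∪ (gB G X y r)).ncard ≤ n :=
        Set.ncard_le_ncard (Set.union_subset (gB_subset G hxX r) (gB_subset G hyX r)) hXfin
      have hiu := Set.ncard_inter_add_ncard_union (gB G X x r) (gB G X y r)
        (hXfin.subset (gB_subset G hxX r)) (hXfin.subset (gB_subset G hyX r))
      omega
    obtain ⟨w, hwx, hwy⟩ := hcap
    have hdxy : (G.dist x y : ℝ) ≤ 2 * r := by
      have h1 := gB_dist G hconn X x r w hwx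
      have h2 := gB_dist G hconn X y r w hwy
      have h3 : G.dist x y ≤ G.dist x w + G.dist w y := hconn.dist_triangle
      rw [SimpleGraph.dist_comm (u := w)] at h3
      have : G.dist x y ≤ 2 * r := by omega
      exact_mod_cast this
    have hrb : (r:ℝ) * h ≤ h + 2 * D * Real.log n := by
      rcases max_choice rx ry with e | e <;> rw [hrdef, e]
      · exact hrxb
      · exact hryb
    -- numerical conclusion
    set d : ℝ := (G.dist x y : ℝ) with hddef
    clear_value d
    have hd1 : (1:ℝ) ≤ d := by
      rw [hddef]
      exact_mod_cast hconn.pos_dist_of_ne hne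
    have hdpos : (0:ℝ) < d := by linarith
    have hcomp' : k₁ + k₂ * d ^ a ≤ ‖Φ x - Φ y‖ := by
      rw [hddef]; exact hcomp x y hne
    have hKL : (0:ℝ) ≤ K * Real.log n * h := by positivity
    have stepA : K * k₂ * Real.log n * h * d ^ a ≤ d := by
      have hda : (0:ℝ) ≤ d ^ a := le_of_lt (Real.rpow_pos_of_pos hdpos a)
      calc K * k₂ * Real.log n * h * d ^ a
          = K * Real.log n * h * (k₂ * d ^ a) := by ring
        _ ≤ K * Real.log n * h * (k₁ + k₂ * d ^ a) := by nlinarith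
        _ ≤ K * Real.log n * h * ‖Φ x - Φ y‖ := mul_le_mul_of_nonneg_left hcomp' hKL
        _ ≤ d := hkey
    have hda : (0:ℝ) < d ^ a := Real.rpow_pos_of_pos hdpos a
    have stepB : K * k₂ * Real.log n * h ≤ d ^ ((1:ℝ) - a) := by
      have e : d ^ ((1:ℝ) - a) = d / d ^ a := by
        rw [Real.rpow_sub hdpos, Real.rpow_one]
      rw [e, le_div_iff₀ hda]
      calc K * k₂ * Real.log n * h * d ^ a = K * k₂ * Real.log n * h * d ^ a := rfl
        _ ≤ d := stepA
    have stepC : d ≤ C₁ * Real.log n / h := by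
      rw [le_div_iff₀ hpos]
      have e1 : d * h ≤ 2 * ((r:ℝ) * h) := by nlinarith
      have e4 : 2 * (D:ℝ) ≤ (2 * D / Real.log 2) * Real.log n := by
        have : (2 * (D:ℝ) / Real.log 2) * Real.log 2 = 2 * D :=
          div_mul_cancel₀ _ (ne_of_gt hlog2)
        nlinarith [mul_le_mul_of_nonneg_left hlogn2 (by positivity : (0:ℝ) ≤ 2 * D / Real.log 2)]
      rw [hC₁def]
      nlinarith
    have stepD : K * k₂ * Real.log n * h ≤ (C₁ * Real.log n / h) ^ ((1:ℝ) - a) :=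
      le_trans stepB (Real.rpow_le_rpow (by linarith) stepC (by linarith))
    have hCL0 : (0:ℝ) ≤ C₁ * Real.log n := by positivity
    have stepE : (C₁ * Real.log n / h) ^ ((1:ℝ) - a)
        = (C₁ * Real.log n) ^ ((1:ℝ) - a) / h ^ ((1:ℝ) - a) :=
      Real.div_rpow hCL0 (le_of_lt hpos) _
    have hh1a : (0:ℝ) < h ^ ((1:ℝ) - a) := Real.rpow_pos_of_pos hpos _
    have stepF : K * k₂ * Real.log n * (h * h ^ ((1:ℝ) - a))
        ≤ (C₁ * Real.log n) ^ ((1:ℝ) - a) := by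
      have := mul_le_mul_of_nonneg_right (stepD.trans_eq stepE) (le_of_lt hh1a)
      rw [div_mul_cancel₀ _ (ne_of_gt hh1a)] at this
      nlinarith
    have hpow2 : h * h ^ ((1:ℝ) - a) = h ^ ((2:ℝ) - a) := by
      calc h * h ^ ((1:ℝ) - a) = h ^ (1:ℝ) * h ^ ((1:ℝ) - a) := by rw [Real.rpow_one]
        _ = h ^ ((1:ℝ) + ((1:ℝ) - a)) := (Real.rpow_add hpos _ _).symm
        _ = h ^ ((2:ℝ) - a) := by rw [show (1:ℝ) + ((1:ℝ) - a) = (2:ℝ) - a by ring]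
    have hpowlog : Real.log n = Real.log n ^ ((1:ℝ) - a) * Real.log n ^ a := by
      calc Real.log n = Real.log n ^ (1:ℝ) := (Real.rpow_one _).symm
        _ = Real.log n ^ (((1:ℝ) - a) + a) := by rw [show ((1:ℝ) - a) + a = (1:ℝ) by ring]
        _ = Real.log n ^ ((1:ℝ) - a) * Real.log n ^ a := Real.rpow_add hlogn _ _
    have stepG : (C₁ * Real.log n) ^ ((1:ℝ) - a)
        = C₁ ^ ((1:ℝ) - a) * Real.log n ^ ((1:ℝ) - a) :=
      Real.mul_rpow hC₁0 (le_of_lt hlogn)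
    have hln1a : (0:ℝ) < Real.log n ^ ((1:ℝ) - a) := Real.rpow_pos_of_pos hlogn _
    have stepH : K * k₂ * (Real.log n ^ a * h ^ ((2:ℝ) - a)) * Real.log n ^ ((1:ℝ) - a)
        ≤ C₁ ^ ((1:ℝ) - a) * Real.log n ^ ((1:ℝ) - a) := by
      calc K * k₂ * (Real.log n ^ a * h ^ ((2:ℝ) - a)) * Real.log n ^ ((1:ℝ) - a)
          = K * k₂ * (Real.log n ^ ((1:ℝ) - a) * Real.log n ^ a) * h ^ ((2:ℝ) - a) := by ring
        _ = K * k₂ * Real.log n * h ^ ((2:ℝ) - a) := by rw [← hpowlog]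
        _ = K * k₂ * Real.log n * (h * h ^ ((1:ℝ) - a)) := by rw [hpow2]
        _ ≤ (C₁ * Real.log n) ^ ((1:ℝ) - a) := stepF
        _ = C₁ ^ ((1:ℝ) - a) * Real.log n ^ ((1:ℝ) - a) := stepG
    have stepI : K * k₂ * (Real.log n ^ a * h ^ ((2:ℝ) - a)) ≤ C₁ ^ ((1:ℝ) - a) :=
      le_of_mul_le_mul_right (by linarith [stepH]) hln1a
    have hfinal : h ^ ((2:ℝ) - a) * Real.log n ^ a ≤ C₁ ^ ((1:ℝ) - a) / (K * k₂) := by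
      rw [le_div_iff₀ (mul_pos hK hk₂)]
      nlinarith
    calc h ^ (2 - a) * Real.log n ^ a ≤ C₁ ^ ((1:ℝ) - a) / (K * k₂) := hfinal
      _ ≤ K' := by rw [hK'def]; linarith
  refine ⟨⟨K', hK'pos, part1⟩, ?_⟩
  -- Part 2
  set c : ℝ := a / (2 - a) with hcdef
  have hc0 : 0 < c := by rw [hcdef]; positivity
  set CL : ℝ := (K' * 2 ^ a) ^ ((1:ℝ) / (2 - a)) with hCLdef
  clear_value CL
  have h2apos : (0:ℝ) < 2 ^ a := Real.rpow_pos_of_pos (by norm_num) a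
  have hCL0 : 0 < CL := by
    rw [hCLdef]
    exact Real.rpow_pos_of_pos (mul_pos hK'pos h2apos) _
  set K'' : ℝ := (D:ℝ) * (4 * c) ^ c + CL with hK''def
  clear_value K''
  have hK''pos : 0 < K'' := by
    have : (0:ℝ) ≤ (D:ℝ) * (4 * c) ^ c := by positivity
    linarith
  have hCLK : CL ≤ K'' := by
    have : (0:ℝ) ≤ (D:ℝ) * (4 * c) ^ c := by positivity
    rw [hK''def]; linarith
  refine ⟨K'', hK''pos, 16, ?_⟩
  intro n hn
  have hn16 : (16:ℝ) ≤ (n:ℝ) := by exact_mod_cast hn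
  have hn1 : (1:ℝ) ≤ (n:ℝ) := by linarith
  have hnpos : (0:ℝ) < (n:ℝ) := by linarith
  have hlogn : 0 < Real.log n := Real.log_pos (by linarith)
  have hlc : 0 < Real.log n ^ c := Real.rpow_pos_of_pos hlogn c
  have hsq0 : (0:ℝ) < (n:ℝ) ^ ((1:ℝ)/2) := Real.rpow_pos_of_pos hnpos _
  -- (log n)^c ≤ (4c)^c * n^(1/4)
  have hlogbound : Real.log n ^ c ≤ (4 * c) ^ c * (n:ℝ) ^ ((1:ℝ)/4) := by
    set ε : ℝ := 1 / (4 * c) with hεdef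
    have hε0 : 0 < ε := by rw [hεdef]; positivity
    have hne : (0:ℝ) < (n:ℝ) ^ ε := Real.rpow_pos_of_pos hnpos ε
    have h1 : ε * Real.log n ≤ (n:ℝ) ^ ε := by
      have := Real.log_le_sub_one_of_pos hne
      rw [Real.log_rpow hnpos] at this
      linarith
    have h2 : Real.log n ≤ (4 * c) * (n:ℝ) ^ ε := by
      have h4c : (4:ℝ) * c = 1 / ε := by rw [hεdef]; field_simp
      rw [h4c, show (1:ℝ) / ε * (n:ℝ) ^ ε = (n:ℝ) ^ ε / ε by ring, le_div_iff₀ hε0]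
      nlinarith
    calc Real.log n ^ c ≤ ((4 * c) * (n:ℝ) ^ ε) ^ c :=
          Real.rpow_le_rpow (le_of_lt hlogn) h2 (le_of_lt hc0)
      _ = (4 * c) ^ c * ((n:ℝ) ^ ε) ^ c := Real.mul_rpow (by positivity) (by positivity)
      _ = (4 * c) ^ c * (n:ℝ) ^ (ε * c) := by rw [← Real.rpow_mul (le_of_lt hnpos)]
      _ = (4 * c) ^ c * (n:ℝ) ^ ((1:ℝ)/4) := by
          rw [show ε * c = (1:ℝ)/4 by rw [hεdef]; field_simp]
  -- every element of the sep-set is at most n * (K'' / (log n)^c)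
  have hbound : ∀ x ∈ {x | ∃ F : Set V, F.Finite ∧ F.ncard ≤ n ∧
      x = (F.ncard : ℝ) * cheeger G F}, x ≤ (n:ℝ) * (K'' / Real.log n ^ c) := by
    rintro x ⟨F, hFfin, hFle, rfl⟩
    have hch0 : 0 ≤ cheeger G F := aux_cheeger_nonneg G F
    rcases Nat.lt_or_ge F.ncard 2 with hm1 | hm2
    · -- degenerate: |F| ≤ 1 forces cheeger = 0
      have hempty : {x | ∃ A : Set V, A ⊆ F ∧ A.Nonempty ∧ 2 * A.ncard ≤ F.ncard ∧
          x = ((inbd G F A).ncard : ℝ) / (A.ncard : ℝ)} = ∅ := by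
        rw [Set.eq_empty_iff_forall_notMem]
        rintro z ⟨A, hAF, hAne, hA2, -⟩
        have : 0 < A.ncard := (Set.ncard_pos (hFfin.subset hAF)).mpr hAne
        omega
      have hch : cheeger G F = 0 := by
        unfold SepProfile.cheeger
        rw [hempty]
        exact Real.sInf_empty
      rw [hch, mul_zero]
      positivity
    · -- cheeger G F ≤ D
      obtain ⟨x₀, hx₀⟩ : F.Nonempty := Set.nonempty_of_ncard_ne_zero (by omega)
      have hchD : cheeger G F ≤ (D:ℝ) := by
        have hle : cheeger G F ≤ ((inbd G F {x₀}).ncard : ℝ) / ((({x₀} : Set V).ncard : ℝ)) := by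
          refine csInf_le (aux_cheeger_bdd G F) ⟨{x₀}, ?_, ⟨x₀, rfl⟩, ?_, rfl⟩
          · simpa using hx₀
          · rw [Set.ncard_singleton]; omega
        have hcount : (inbd G F {x₀}).ncard ≤ D := by
          have hstep : (inbd G F {x₀}).ncard ≤ (G.neighborSet x₀).ncard := by
            apply Set.ncard_le_ncard_of_injOn Prod.snd ?_ ?_ (hfin x₀)
            · rintro ⟨p1, p2⟩ ⟨hadj, h1, _⟩
              have e : p1 = x₀ := h1
              rw [e] at hadj
              exact hadj
            · rintro ⟨p1, p2⟩ hp ⟨q1, q2⟩ hq hpq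
              have e1 : p1 = x₀ := hp.2.1
              have e2 : q1 = x₀ := hq.2.1
              exact Prod.ext (e1.trans e2.symm) hpq
          exact hstep.trans (hdeg x₀)
        rw [Set.ncard_singleton] at hle
        calc cheeger G F ≤ ((inbd G F {x₀}).ncard : ℝ) / 1 := by exact_mod_cast hle
          _ = ((inbd G F {x₀}).ncard : ℝ) := div_one _
          _ ≤ (D:ℝ) := by exact_mod_cast hcount
      have hmn : ((F.ncard : ℕ):ℝ) ≤ (n:ℝ) := by exact_mod_cast hFle
      rcases le_or_gt ((F.ncard : ℕ):ℝ) ((n:ℝ) ^ ((1:ℝ)/2)) with hsm | hbg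
      · -- small sets: |F| h ≤ D √n
        have h1 : (F.ncard : ℝ) * cheeger G F ≤ (n:ℝ) ^ ((1:ℝ)/2) * (D:ℝ) :=
          mul_le_mul hsm hchD hch0 (le_of_lt hsq0)
        have h2 : (n:ℝ) ^ ((1:ℝ)/2) * (D:ℝ) * Real.log n ^ c ≤ K'' * n := by
          calc (n:ℝ) ^ ((1:ℝ)/2) * (D:ℝ) * Real.log n ^ c
              ≤ (n:ℝ) ^ ((1:ℝ)/2) * (D:ℝ) * ((4 * c) ^ c * (n:ℝ) ^ ((1:ℝ)/4)) := by
                apply mul_le_mul_of_nonneg_left hlogbound (by positivity)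
            _ = (D:ℝ) * (4 * c) ^ c * ((n:ℝ) ^ ((1:ℝ)/2) * (n:ℝ) ^ ((1:ℝ)/4)) := by ring
            _ = (D:ℝ) * (4 * c) ^ c * (n:ℝ) ^ ((3:ℝ)/4) := by
                rw [← Real.rpow_add hnpos]; norm_num
            _ ≤ (D:ℝ) * (4 * c) ^ c * (n:ℝ) ^ (1:ℝ) := by
                apply mul_le_mul_of_nonneg_left
                  (Real.rpow_le_rpow_of_exponent_le hn1 (by norm_num)) (by positivity)
            _ = (D:ℝ) * (4 * c) ^ c * (n:ℝ) := by rw [Real.rpow_one]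
            _ ≤ K'' * n := by
                rw [hK''def]
                nlinarith [hCL0, hnpos]
        have h3 : (n:ℝ) ^ ((1:ℝ)/2) * (D:ℝ) ≤ (n:ℝ) * (K'' / Real.log n ^ c) := by
          rw [show (n:ℝ) * (K'' / Real.log n ^ c) = K'' * n / Real.log n ^ c by ring,
            le_div_iff₀ hlc]
          exact h2
        exact le_trans h1 h3
      · -- large sets: use part 1
        have hp1 := part1 F hFfin hm2
        have hmlog : (0:ℝ) < (F.ncard : ℝ) := by
          have : (0:ℝ) < (n:ℝ) ^ ((1:ℝ)/2) := hsq0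
          linarith
        have hlogm : Real.log n / 2 ≤ Real.log (F.ncard : ℝ) := by
          have hstep : Real.log ((n:ℝ) ^ ((1:ℝ)/2)) ≤ Real.log (F.ncard : ℝ) :=
            Real.log_le_log hsq0 (le_of_lt hbg)
          rw [Real.log_rpow hnpos] at hstep
          linarith
        have hq : cheeger G F ^ ((2:ℝ) - a) ≤ K' * 2 ^ a / Real.log n ^ a := by
          rw [le_div_iff₀ (Real.rpow_pos_of_pos hlogn a)]
          have hkey : cheeger G F ^ ((2:ℝ) - a) * (Real.log n / 2) ^ a ≤ K' := by
            calc cheeger G F ^ ((2:ℝ) - a) * (Real.log n / 2) ^ a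
                ≤ cheeger G F ^ ((2:ℝ) - a) * Real.log (F.ncard : ℝ) ^ a := by
                  apply mul_le_mul_of_nonneg_left
                    (Real.rpow_le_rpow (by positivity) hlogm (le_of_lt ha0))
                    (Real.rpow_nonneg hch0 _)
              _ ≤ K' := hp1
          have hdivpow : (Real.log n / 2) ^ a = Real.log n ^ a / 2 ^ a :=
            Real.div_rpow (le_of_lt hlogn) (by norm_num) a
          rw [hdivpow] at hkey
          have hmul := mul_le_mul_of_nonneg_right hkey (le_of_lt h2apos)
          have e : cheeger G F ^ ((2:ℝ) - a) * (Real.log n ^ a / 2 ^ a) * 2 ^ a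
              = cheeger G F ^ ((2:ℝ) - a) * Real.log n ^ a := by
            field_simp
          rw [e] at hmul
          linarith
        have hstep : cheeger G F ≤ CL / Real.log n ^ c := by
          have l1 : (cheeger G F ^ ((2:ℝ) - a)) ^ ((1:ℝ)/(2 - a)) = cheeger G F := by
            rw [← Real.rpow_mul hch0,
              show ((2:ℝ) - a) * ((1:ℝ)/(2 - a)) = 1 by field_simp,
              Real.rpow_one]
          have l2 : (K' * 2 ^ a / Real.log n ^ a) ^ ((1:ℝ)/(2 - a))
              = CL / Real.log n ^ c := by
            rw [Real.div_rpow (by positivity) (by positivity), hCLdef]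
            congr 1
            rw [← Real.rpow_mul (le_of_lt hlogn),
              show a * ((1:ℝ)/(2 - a)) = c by rw [hcdef]; ring]
          calc cheeger G F = (cheeger G F ^ ((2:ℝ) - a)) ^ ((1:ℝ)/(2 - a)) := l1.symm
            _ ≤ (K' * 2 ^ a / Real.log n ^ a) ^ ((1:ℝ)/(2 - a)) :=
                Real.rpow_le_rpow (by positivity) hq (by positivity)
            _ = CL / Real.log n ^ c := l2
        calc (F.ncard : ℝ) * cheeger G F ≤ (n:ℝ) * (CL / Real.log n ^ c) :=
              mul_le_mul hmn hstep hch0 (le_of_lt hnpos)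
          _ ≤ (n:ℝ) * (K'' / Real.log n ^ c) := by
              apply mul_le_mul_of_nonneg_left _ (le_of_lt hnpos)
              gcongr
  have hsup : sep G n ≤ (n:ℝ) * (K'' / Real.log n ^ c) :=
    Real.sSup_le hbound (by positivity)
  rw [div_le_iff₀ hnpos]
  calc sep G n ≤ (n:ℝ) * (K'' / Real.log n ^ c) := hsup
    _ = K'' / Real.log n ^ c * n := by ring
end

section
/- Fix d₁, d₂, C > 0 with d₂ ≥ d₁ > 1 and d₁² > d₂ − d₁. Let G be a graph, g > 0, ε > 0 with 2^{1/(d₁+1)} ≤ 2^{1/d₁}/(1+ε), and let F₁ be a finite vertex set with |∂F₁|/|F₁| ≤ C/r and |F₁| ≤ b·r^{d₂} for some r ≥ 1, b > 0, such that every subset A of F₁ satisfies |∂A| ≥ g·|A|^{1−1/d₁}. Define recursively F_{i+1} ⊆ F_i to be any subset with |F_{i+1}| ≤ |F_i|/2 and |∂F_{i+1}|/|F_{i+1}| ≤ (1+ε)·|∂F_i|/|F_i| as long as one exists, and let F_k be the final set. Then |F_k| ≥ c·g^{d₁+1}·r^{(d₁² − (d₂ − d₁))/d₁} with c = C^{−(d₁+1)}·b^{−1/d₁}.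 -/
open Set Filter

open SepProfile Real

theorem stmt17 {V : Type*} (G : SimpleGraph V)
    (d₁ d₂ C g ε b r : ℝ)
    (hd₁ : 1 < d₁) (hd₁₂ : d₁ ≤ d₂) (hsq : d₂ - d₁ < d₁ ^ 2)
    (hC : 0 < C) (hg : 0 < g) (hb : 0 < b) (hr : 1 ≤ r)
    (hε : 0 < ε) (hε2 : (2:ℝ) ^ (1/(d₁+1)) ≤ (2:ℝ) ^ (1/d₁) / (1+ε))
    (k : ℕ) (hk : 1 ≤ k) (F : ℕ → Set V)
    (hfin : (F 1).Finite) (hne : (F 1).Nonempty)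
    (hratio1 : ratio G (F 1) ≤ C / r)
    (hsize1 : ((F 1).ncard : ℝ) ≤ b * r ^ d₂)
    (hiso : ∀ A : Set V, A ⊆ F 1 → A.Nonempty →
      g * ((A.ncard : ℝ)) ^ (1 - 1/d₁) ≤ ((ebd G A).ncard : ℝ))
    (hchain : ∀ i : ℕ, 1 ≤ i → i < k →
      F (i+1) ⊆ F i ∧ (F (i+1)).Nonempty ∧
        2 * (F (i+1)).ncard ≤ (F i).ncard ∧
        ratio G (F (i+1)) ≤ (1+ε) * ratio G (F i))
    (hstop : ¬ ∃ A : Set V, A ⊆ F k ∧ A.Nonempty ∧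
      2 * A.ncard ≤ (F k).ncard ∧ ratio G A ≤ (1+ε) * ratio G (F k)) :
    C ^ (-(d₁+1)) * b ^ (-(1/d₁)) * g ^ (d₁+1) *
        r ^ ((d₁ ^ 2 - (d₂ - d₁)) / d₁)
      ≤ ((F k).ncard : ℝ) := by
  classical
  -- positivity basics
  have hd₁0 : (0:ℝ) < d₁ := by linarith
  have hr0 : (0:ℝ) < r := by linarith
  have hε1 : (0:ℝ) < 1 + ε := by linarith
  -- chain induction
  have key : ∀ j : ℕ, 1 + j ≤ k → F (1+j) ⊆ F 1 ∧ (F (1+j)).Nonempty ∧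
      ((2:ℝ)^j * ((F (1+j)).ncard : ℝ) ≤ ((F 1).ncard : ℝ)) ∧
      ratio G (F (1+j)) ≤ (1+ε)^j * ratio G (F 1) := by
    intro j
    induction j with
    | zero =>
      intro _
      exact ⟨subset_rfl, hne, by norm_num, by norm_num⟩
    | succ j ih =>
      intro hjk
      obtain ⟨hsub, hne', hcard, hrat⟩ := ih (by omega)
      obtain ⟨hs2, hne2, hc2, hr2⟩ := hchain (1+j) (by omega) (by omega)
      refine ⟨hs2.trans hsub, hne2, ?_, ?_⟩
      · have h2c : (2:ℝ) * ((F (1+j+1)).ncard:ℝ) ≤ ((F (1+j)).ncard:ℝ) := by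
          exact_mod_cast hc2
        calc (2:ℝ)^(j+1) * ((F (1+(j+1))).ncard:ℝ)
            = (2:ℝ)^j * ((2:ℝ) * ((F (1+j+1)).ncard:ℝ)) := by ring
          _ ≤ (2:ℝ)^j * ((F (1+j)).ncard:ℝ) := by
              have : (0:ℝ) ≤ (2:ℝ)^j := by positivity
              exact mul_le_mul_of_nonneg_left h2c this
          _ ≤ ((F 1).ncard : ℝ) := hcard
      · calc ratio G (F (1+(j+1))) ≤ (1+ε) * ratio G (F (1+j)) := hr2
          _ ≤ (1+ε) * ((1+ε)^j * ratio G (F 1)) :=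
              mul_le_mul_of_nonneg_left hrat hε1.le
          _ = (1+ε)^(j+1) * ratio G (F 1) := by ring
  set m : ℕ := k - 1 with hm
  have hkm : 1 + m = k := by omega
  obtain ⟨hsubk, hnek, hcardk, hratk0⟩ := by
    have := key m (by omega)
    rwa [hkm] at this
  have hratk : ratio G (F k) ≤ (1+ε)^m * (C / r) := by
    refine hratk0.trans ?_
    exact mul_le_mul_of_nonneg_left hratio1 (by positivity)
  -- cardinalities
  have hfink : (F k).Finite := hfin.subset hsubk
  have npos : (0:ℝ) < ((F k).ncard : ℝ) := by
    have := (Set.ncard_pos hfink).mpr hnek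
    exact_mod_cast this
  have Npos : (0:ℝ) < ((F 1).ncard : ℝ) := by
    have := (Set.ncard_pos hfin).mpr hne
    exact_mod_cast this
  -- isoperimetry on F k
  have hisok := hiso (F k) hsubk hnek
  have Epos : (0:ℝ) < ((ebd G (F k)).ncard : ℝ) :=
    lt_of_lt_of_le (by positivity) hisok
  have hratpos : 0 < ratio G (F k) := div_pos Epos npos
  -- abbreviations for logs
  set a := Real.log g with ha
  set c := Real.log C with hc
  set ρ := Real.log r with hρ
  set β := Real.log b with hβ
  set η := Real.log (1+ε) with hη
  set L := Real.log 2 with hL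
  set ln := Real.log ((F k).ncard : ℝ) with hln
  set lN := Real.log ((F 1).ncard : ℝ) with hlN
  set M := (m:ℝ) with hM
  have hM0 : (0:ℝ) ≤ M := Nat.cast_nonneg m
  -- H1 : a - (1/d₁)*ln ≤ M*η + c - ρ
  have hlogE : a + (1-1/d₁)*ln ≤ Real.log ((ebd G (F k)).ncard : ℝ) := by
    have h := Real.log_le_log (by positivity) hisok
    rwa [Real.log_mul hg.ne' (by positivity), Real.log_rpow npos] at h
  have hlogR : Real.log (ratio G (F k))
      = Real.log ((ebd G (F k)).ncard : ℝ) - ln := by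
    rw [ratio, Real.log_div Epos.ne' npos.ne']
  have hlogUB : Real.log (ratio G (F k)) ≤ M*η + (c - ρ) := by
    have h := Real.log_le_log hratpos hratk
    rwa [Real.log_mul (by positivity) (by positivity), Real.log_pow,
      Real.log_div hC.ne' hr0.ne'] at h
  have H1 : a - (1/d₁)*ln ≤ M*η + c - ρ := by
    rw [hlogR] at hlogUB
    linarith
  -- H2
  have H2 : M*L + ln ≤ lN := by
    have h := Real.log_le_log (by positivity) hcardk
    rwa [Real.log_mul (by positivity) npos.ne', Real.log_pow] at h
  -- H3
  have H3 : lN ≤ β + d₂*ρ := by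
    have h := Real.log_le_log Npos hsize1
    rwa [Real.log_mul hb.ne' (by positivity), Real.log_rpow hr0] at h
  -- H4 : η*(d₁*(d₁+1)) ≤ L
  have H4 : η*(d₁*(d₁+1)) ≤ L := by
    have h0 : (2:ℝ)^(1/(d₁+1)) * (1+ε) ≤ (2:ℝ)^(1/d₁) :=
      (le_div_iff₀ hε1).mp hε2
    have h := Real.log_le_log (by positivity) h0
    rw [Real.log_mul (by positivity) hε1.ne', Real.log_rpow (by norm_num),
      Real.log_rpow (by norm_num)] at h
    have e3 : (d₁*(d₁+1))*((1/d₁)*L - (1/(d₁+1))*L) = L := by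
      field_simp
      ring
    linarith [mul_le_mul_of_nonneg_left h (by positivity : (0:ℝ) ≤ d₁*(d₁+1)), e3]
  -- multiplied forms
  have h1d : d₁*a - ln ≤ d₁*(M*η) + d₁*c - d₁*ρ := by
    have hln1 : d₁ * ((1/d₁)*ln) = ln := by field_simp
    linarith [mul_le_mul_of_nonneg_left H1 hd₁0.le, hln1]
  have hXY : d₁*(d₁+1)*(M*η) ≤ M*L := by
    linarith [mul_le_mul_of_nonneg_left H4 hM0]
  have h1dd : (d₁+1)*(d₁*a - ln) ≤ (d₁+1)*(d₁*(M*η) + d₁*c - d₁*ρ) :=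
    mul_le_mul_of_nonneg_left h1d (by linarith)
  -- goal in log form
  have hgoal' : d₁ * (-(d₁+1)*c - (1/d₁)*β + (d₁+1)*a + ((d₁^2-(d₂-d₁))/d₁)*ρ)
      ≤ d₁ * ln := by
    have e1 : d₁ * ((1/d₁)*β) = β := by field_simp
    have e2 : d₁ * (((d₁^2-(d₂-d₁))/d₁)*ρ) = (d₁^2-(d₂-d₁))*ρ := by
      field_simp
    linarith [h1dd, H2, H3, hXY, e1, e2]
  have GoalLog : -(d₁+1)*c - (1/d₁)*β + (d₁+1)*a + ((d₁^2-(d₂-d₁))/d₁)*ρ ≤ ln :=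
    le_of_mul_le_mul_left hgoal' hd₁0
  -- convert back from logs
  have LHSpos : (0:ℝ) < C ^ (-(d₁+1)) * b ^ (-(1/d₁)) * g ^ (d₁+1) *
      r ^ ((d₁ ^ 2 - (d₂ - d₁)) / d₁) := by positivity
  have hlogLHS : Real.log (C ^ (-(d₁+1)) * b ^ (-(1/d₁)) * g ^ (d₁+1) *
      r ^ ((d₁ ^ 2 - (d₂ - d₁)) / d₁))
      = -(d₁+1)*c - (1/d₁)*β + (d₁+1)*a + ((d₁^2-(d₂-d₁))/d₁)*ρ := by
    rw [Real.log_mul (by positivity) (by positivity),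
      Real.log_mul (by positivity) (by positivity),
      Real.log_mul (by positivity) (by positivity),
      Real.log_rpow hC, Real.log_rpow hb, Real.log_rpow hg, Real.log_rpow hr0]
    ring
  have hfinal : Real.log (C ^ (-(d₁+1)) * b ^ (-(1/d₁)) * g ^ (d₁+1) *
      r ^ ((d₁ ^ 2 - (d₂ - d₁)) / d₁)) ≤ Real.log ((F k).ncard : ℝ) := by
    rw [hlogLHS]; exact GoalLog
  have := Real.exp_le_exp.mpr hfinal
  rwa [Real.exp_log LHSpos, Real.exp_log npos] at this
end
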